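/- Katz's index is score monotone on undirected graphs: if G' is obtained from G by adding an edge between non-adjacent vertices x and y, then for any α with 0 < α < 1/ρ(G'), the Katz score [1(I−αG')^{-1}]_x strictly exceeds [1(I−αG)^{-1}]_x, and similarly for y. -/

import Mathlib

/-- The spectral radius of a real square matrix: the supremum of the absolute values
of its (complex) eigenvalues. -/
noncomputable def specRad {n : Type*} [Fintype n] [DecidableEq n]
    (M : Matrix n n ℝ) : ℝ :=
  sSup ((fun z : ℂ => ‖z‖) '' spectrum ℂ (M.map (algebraMap ℝ ℂ)))

/-- Katz's index with parameter `α` of a vertex `v`: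
`[𝟏 (I − αG)⁻¹]_v = Σ_{i≥0} α^i (𝟏 G^i)_v`. -/
noncomputable def katz {V : Type*} [Fintype V] [DecidableEq V]
    (A : Matrix V V ℝ) (α : ℝ) (v : V) : ℝ :=
  Matrix.vecMul (fun _ => (1 : ℝ)) (1 - α • A)⁻¹ v

section Aux

open Matrix Filter
open scoped ENNReal NNReal

attribute [local instance] Matrix.linftyOpNormedAddCommGroup Matrix.linftyOpNormedRing
  Matrix.linftyOpNormedAlgebra Matrix.linftyOpNormedSpace

variable {V : Type*} [Fintype V] [DecidableEq V]

noncomputable instance : CompleteSpace (Matrix V V ℝ) :=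
  inferInstance

lemma map_pow_c (M : Matrix V V ℝ) (n : ℕ) :
    (M.map (algebraMap ℝ ℂ)) ^ n = (M ^ n).map (algebraMap ℝ ℂ) := by
  have := map_pow ((algebraMap ℝ ℂ).mapMatrix (m := V)) M n
  simpa [RingHom.mapMatrix_apply] using this.symm

lemma nnnorm_map_c (M : Matrix V V ℝ) : ‖M.map (algebraMap ℝ ℂ)‖₊ = ‖M‖₊ := by
  rw [Matrix.linfty_opNNNorm_def, Matrix.linfty_opNNNorm_def]
  congr 1; ext i; congr 1; ext j
  simp [Matrix.map_apply]

-- entrywise monotonicity of powers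
lemma pow_entry_mono (M N : Matrix V V ℝ) (h0 : ∀ u v, 0 ≤ M u v)
    (h : ∀ u v, M u v ≤ N u v) (n : ℕ) :
    ∀ u v, 0 ≤ (M ^ n) u v ∧ (M ^ n) u v ≤ (N ^ n) u v := by
  induction n with
  | zero => intro u v; constructor <;> simp [Matrix.one_apply]; positivity
  | succ n ih =>
    intro u v
    rw [pow_succ, pow_succ, Matrix.mul_apply, Matrix.mul_apply]
    constructor
    · exact Finset.sum_nonneg fun w _ => mul_nonneg (ih u w).1 (h0 w v)
    · refine Finset.sum_le_sum fun w _ => mul_le_mul (ih u w).2 (h w v) (h0 w v)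
        (le_trans (ih u w).1 (ih u w).2)

lemma nnnorm_le_of_entry_le (M N : Matrix V V ℝ) (h0 : ∀ u v, 0 ≤ M u v)
    (h : ∀ u v, M u v ≤ N u v) : ‖M‖₊ ≤ ‖N‖₊ := by
  rw [Matrix.linfty_opNNNorm_def, Matrix.linfty_opNNNorm_def]
  apply Finset.sup_mono_fun
  intro i _
  have : ∀ j, ‖M i j‖₊ ≤ ‖N i j‖₊ := by
    intro j
    have h1 := h0 i j; have h2 := h i j
    simp only [← NNReal.coe_le_coe, coe_nnnorm, Real.norm_eq_abs]
    rw [abs_of_nonneg h1, abs_of_nonneg (h1.trans h2)]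
    exact h2
  exact Finset.sum_le_sum fun j _ => this j

noncomputable instance : CompleteSpace (Matrix V V ℂ) :=
  inferInstance

lemma smul_map (M : Matrix V V ℝ) (α : ℝ) :
    (α • M).map (algebraMap ℝ ℂ) = (α : ℂ) • M.map (algebraMap ℝ ℂ) := by
  ext u v
  simp [Matrix.map_apply]

lemma specRadius_smul_lt [Nonempty V] (M : Matrix V V ℝ) (α : ℝ) (hα : 0 < α)
    (hρ : α * specRad M < 1) :
    spectralRadius ℂ ((α • M).map (algebraMap ℝ ℂ)) < 1 := by
  set Mc := M.map (algebraMap ℝ ℂ) with hMc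
  have key : ∀ z ∈ spectrum ℂ ((α • M).map (algebraMap ℝ ℂ)), ‖z‖₊ < 1 := by
    intro z hz
    rw [smul_map] at hz
    set g : ℂˣ := Units.mk0 (α : ℂ) (by exact_mod_cast hα.ne') with hg
    have hu : (α : ℂ) • Mc = g • Mc := (Units.smul_def g Mc).symm
    rw [hu, spectrum.unit_smul_eq_smul] at hz
    obtain ⟨w, hw, rfl⟩ := hz
    have hb : BddAbove ((fun z : ℂ => ‖z‖) '' spectrum ℂ Mc) :=
      ((spectrum.isCompact Mc).image continuous_norm).bddAbove
    have hle : ‖w‖ ≤ specRad M := le_csSup hb ⟨w, hw, rfl⟩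
    have habs : ‖(α : ℂ) * w‖ < 1 := by
      have : ‖(α : ℂ) * w‖ = α * ‖w‖ := by
        rw [norm_mul, Complex.norm_real, Real.norm_of_nonneg hα.le]
      rw [this]
      exact lt_of_le_of_lt (by nlinarith) hρ
    rw [← NNReal.coe_lt_coe]
    calc (‖g • w‖₊ : ℝ) = ‖(α : ℂ) * w‖ := by
          simp [Units.smul_def, hg, coe_nnnorm, smul_eq_mul]
      _ < 1 := habs
  have hne : (spectrum ℂ ((α • M).map (algebraMap ℝ ℂ))).Nonempty :=
    spectrum.nonempty _
  have := spectrum.spectralRadius_lt_of_forall_lt_of_nonempty hne (r := 1) key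
  simpa using this

lemma specRadius_mono (M N : Matrix V V ℝ) (h0 : ∀ u v, 0 ≤ M u v)
    (h : ∀ u v, M u v ≤ N u v) :
    spectralRadius ℂ (M.map (algebraMap ℝ ℂ)) ≤
      spectralRadius ℂ (N.map (algebraMap ℝ ℂ)) := by
  refine le_of_tendsto_of_tendsto'
    (spectrum.pow_nnnorm_pow_one_div_tendsto_nhds_spectralRadius (M.map (algebraMap ℝ ℂ)))
    (spectrum.pow_nnnorm_pow_one_div_tendsto_nhds_spectralRadius (N.map (algebraMap ℝ ℂ)))
    fun n => ?_
  have hM : ‖(M.map (algebraMap ℝ ℂ)) ^ n‖₊ = ‖M ^ n‖₊ := by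
    rw [map_pow_c, nnnorm_map_c]
  have hN : ‖(N.map (algebraMap ℝ ℂ)) ^ n‖₊ = ‖N ^ n‖₊ := by
    rw [map_pow_c, nnnorm_map_c]
  rw [hM, hN]
  refine ENNReal.rpow_le_rpow ?_ (by positivity)
  exact_mod_cast nnnorm_le_of_entry_le _ _ (fun u v => (pow_entry_mono M N h0 h n u v).1)
    (fun u v => (pow_entry_mono M N h0 h n u v).2)

lemma neumann (M : Matrix V V ℝ)
    (hρ : spectralRadius ℂ (M.map (algebraMap ℝ ℂ)) < 1) :
    HasSum (fun n : ℕ => M ^ n) (1 - M)⁻¹ := by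
  obtain ⟨c, hc1, hc2⟩ := exists_between hρ
  have hgel := spectrum.pow_nnnorm_pow_one_div_tendsto_nhds_spectralRadius
    (M.map (algebraMap ℝ ℂ))
  have hev : ∀ᶠ n : ℕ in atTop,
      ((‖(M.map (algebraMap ℝ ℂ)) ^ n‖₊ : ℝ≥0∞) ^ (1 / (n:ℝ))) < c :=
    hgel.eventually_lt_const hc1
  have hcne : c ≠ ⊤ := (hc2.trans_le le_top).ne
  have hev2 : ∀ᶠ n : ℕ in atTop, ‖M ^ n‖ ≤ c.toReal ^ n := by
    filter_upwards [hev, eventually_ge_atTop 1] with n hn hn1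
    have hne : (n : ℝ) ≠ 0 := by positivity
    have h1 : (‖M ^ n‖₊ : ℝ≥0∞) < c ^ n := by
      have := (ENNReal.pow_lt_pow_left_iff (n := n) (by omega)).mpr hn
      rwa [← ENNReal.rpow_natCast (_ ^ (1 / (n:ℝ))) n, ← ENNReal.rpow_mul,
        one_div, inv_mul_cancel₀ hne, ENNReal.rpow_one, map_pow_c, nnnorm_map_c] at this
    have h2 : (‖M ^ n‖₊ : ℝ≥0∞).toReal ≤ (c ^ n).toReal :=
      ENNReal.toReal_mono (by simp [ENNReal.pow_ne_top hcne]) h1.le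
    simpa [ENNReal.toReal_pow] using h2
  have hsum : Summable (fun n : ℕ => M ^ n) := by
    refine Summable.of_norm_bounded_eventually_nat (g := fun n => c.toReal ^ n) ?_ hev2
    refine summable_geometric_of_lt_one ENNReal.toReal_nonneg ?_
    have := ENNReal.toReal_mono (by simp) hc2.le
    rcases this.lt_or_eq with h | h
    · simpa using h
    · exfalso
      have : c = 1 := by
        have := ENNReal.toReal_eq_one_iff c |>.mp (by simpa using h)
        exact this
      exact absurd hc2 (by simp [this])
  set S := ∑' n : ℕ, M ^ n with hSdef
  have hS : HasSum (fun n : ℕ => M ^ n) S := hsum.hasSum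
  have hMS : HasSum (fun n : ℕ => M ^ (n + 1)) (M * S) := by
    have := hS.mul_left M
    simpa [← pow_succ'] using this
  have hMS' : HasSum (fun n : ℕ => M ^ (n + 1)) (S - 1) := by
    refine (hasSum_nat_add_iff (f := fun n : ℕ => M ^ n) 1).mpr ?_
    simpa using hS
  have hMSeq : M * S = S - 1 := hMS.unique hMS'
  have hinv : (1 - M) * S = 1 := by
    rw [sub_mul, one_mul, hMSeq]
    abel
  rwa [Matrix.inv_eq_right_inv hinv]

noncomputable def colSumAt (v : V) : Matrix V V ℝ →ₗ[ℝ] ℝ where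
  toFun N := ∑ u, N u v
  map_add' N P := by simp [Finset.sum_add_distrib]
  map_smul' c N := by simp [Finset.mul_sum]

lemma vecMul_one_eq (N : Matrix V V ℝ) (v : V) :
    Matrix.vecMul (fun _ => (1 : ℝ)) N v = ∑ u, N u v := by
  simp [Matrix.vecMul, dotProduct]

lemma katz_hasSum (A : Matrix V V ℝ) (α : ℝ) (v : V)
    (hρ : spectralRadius ℂ ((α • A).map (algebraMap ℝ ℂ)) < 1) :
    HasSum (fun n : ℕ => ∑ u, ((α • A) ^ n) u v) (katz A α v) := by
  have hS := neumann (α • A) hρ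
  have hcont : Continuous (colSumAt (V := V) v) :=
    LinearMap.continuous_of_finiteDimensional _
  have := hS.map (colSumAt (V := V) v).toAddMonoidHom hcont
  simpa [katz, vecMul_one_eq, colSumAt, Function.comp_def] using this

/-- The key strict inequality, stated for one endpoint `v` with other endpoint `w`. -/
lemma katz_lt_aux {V : Type*} [Fintype V] [DecidableEq V]
    (G G' : SimpleGraph V) [DecidableRel G.Adj] [DecidableRel G'.Adj] (x y : V)
    (hne : x ≠ y) (hnadj : ¬ G.Adj x y)
    (hG' : G' = G ⊔ SimpleGraph.fromEdgeSet {s(x, y)})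
    (α : ℝ) (hα : 0 < α) (hρ : α * specRad (G'.adjMatrix ℝ) < 1)
    (v w : V) (hvw : s(v, w) = s(x, y)) :
    katz (G.adjMatrix ℝ) α v < katz (G'.adjMatrix ℝ) α v := by
  have : Nonempty V := ⟨x⟩
  set A := G.adjMatrix ℝ with hA
  set A' := G'.adjMatrix ℝ with hA'
  have hvw' : v ≠ w := by
    rcases Sym2.eq_iff.mp hvw with ⟨rfl, rfl⟩ | ⟨rfl, rfl⟩
    · exact hne
    · exact hne.symm
  have hnadjvw : ¬ G.Adj v w := by
    rcases Sym2.eq_iff.mp hvw with ⟨rfl, rfl⟩ | ⟨rfl, rfl⟩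
    · exact hnadj
    · exact fun h => hnadj h.symm
  have hadj' : G'.Adj v w := by
    rw [hG']
    right
    rw [SimpleGraph.fromEdgeSet_adj]
    exact ⟨by simp [hvw], hvw'⟩
  have hA0 : ∀ u t, 0 ≤ A u t := fun u t => by
    rw [hA, SimpleGraph.adjMatrix_apply]; positivity
  have hAle : ∀ u t, A u t ≤ A' u t := fun u t => by
    rw [hA, hA', SimpleGraph.adjMatrix_apply, SimpleGraph.adjMatrix_apply]
    by_cases h : G.Adj u t
    · have : G'.Adj u t := by rw [hG']; exact Or.inl h
      simp [h, this]
    · simp [h]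
      positivity
  have h0 : ∀ u t, 0 ≤ (α • A) u t := fun u t => by
    simpa using mul_nonneg hα.le (hA0 u t)
  have hle : ∀ u t, (α • A) u t ≤ (α • A') u t := fun u t => by
    simpa using mul_le_mul_of_nonneg_left (hAle u t) hα.le
  have hρ' : spectralRadius ℂ ((α • A').map (algebraMap ℝ ℂ)) < 1 :=
    specRadius_smul_lt A' α hα hρ
  have hρM : spectralRadius ℂ ((α • A).map (algebraMap ℝ ℂ)) < 1 :=
    lt_of_le_of_lt (specRadius_mono _ _ h0 hle) hρ'
  have hS := katz_hasSum A α v hρM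
  have hS' := katz_hasSum A' α v hρ'
  refine hasSum_lt (i := 1) ?_ ?_ hS hS'
  · intro n
    exact Finset.sum_le_sum fun u _ =>
      (pow_entry_mono (α • A) (α • A') h0 hle n u v).2
  · simp only [pow_one]
    refine Finset.sum_lt_sum (fun u _ => hle u v) ⟨w, Finset.mem_univ w, ?_⟩
    have h1 : A w v = 0 := by
      rw [hA, SimpleGraph.adjMatrix_apply, if_neg]
      exact fun h => hnadjvw h.symm
    have h2 : A' w v = 1 := by
      rw [hA', SimpleGraph.adjMatrix_apply, if_pos hadj'.symm]
    simp [h1, h2, hα]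

end Aux

/-- Katz's index is score monotone on undirected graphs: if `G'` is obtained from
`G` by adding an edge between non-adjacent vertices `x` and `y`, then for any
`0 < α < 1/ρ(G')` the Katz score of `x` (and of `y`) strictly increases. -/
theorem katz_score_monotone {V : Type*} [Fintype V] [DecidableEq V]
    (G G' : SimpleGraph V) [DecidableRel G.Adj] [DecidableRel G'.Adj] (x y : V)
    (hne : x ≠ y) (hnadj : ¬ G.Adj x y)
    (hG' : G' = G ⊔ SimpleGraph.fromEdgeSet {s(x, y)})
    (α : ℝ) (hα : 0 < α) (hρ : α * specRad (G'.adjMatrix ℝ) < 1) :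
    katz (G'.adjMatrix ℝ) α x > katz (G.adjMatrix ℝ) α x ∧
    katz (G'.adjMatrix ℝ) α y > katz (G.adjMatrix ℝ) α y := by
  constructor
  · exact katz_lt_aux G G' x y hne hnadj hG' α hα hρ x y rfl
  · exact katz_lt_aux G G' x y hne hnadj hG' α hα hρ y x (Sym2.eq_swap)
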